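/- Let x_0,…,x_n ∈ ℝ, δ > 0, and n ≥ 1. Define for each path i (fixed-point-free function on {0,…,n}) the quantity s(i)² = ∑_{j=0}^n (x_j - x_{i_j})², and assume s(i) > 0 for all paths i. Then with K the standard Gaussian kernel and Φ(h) = ∑_{paths i} ∏_j K_h(x_j - x_{i_j}), one has ∫_0^∞ h · Φ(h) h^{-δ} dh / ∫_0^∞ Φ(h) h^{-δ} dh = C_{n,δ} · (∑_i α(i) s(i)) / (∑_i α(i)), where α(i) = s(i)^{-(n+δ)} and C_{n,δ} = (1/√2)·Γ((n+δ-1)/2)/Γ((n+δ)/2). -/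

import Mathlib

open MeasureTheory Real

/-- The scaled Gaussian kernel `K_h(x) = (1/(h√(2π))) exp(-x²/(2h²))`. -/
noncomputable def gk (h x : ℝ) : ℝ :=
  (1 / (h * Real.sqrt (2 * Real.pi))) * Real.exp (-x ^ 2 / (2 * h ^ 2))

/-- The set of *paths*: fixed-point-free index functions on `{0,…,n}`. -/
def paths (n : ℕ) : Finset (Fin (n + 1) → Fin (n + 1)) :=
  Finset.univ.filter fun i => ∀ j, i j ≠ j

/-- The path statistic `s(i) = √(∑ⱼ (xⱼ - x_{iⱼ})²)`. -/
noncomputable def spath (n : ℕ) (x : Fin (n + 1) → ℝ) (i : Fin (n + 1) → Fin (n + 1)) : ℝ :=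
  Real.sqrt (∑ j, (x j - x (i j)) ^ 2)

lemma pt_eq {a c x : ℝ} (hx : 0 < x) :
    (|(-1 : ℝ)| * x ^ ((-1 : ℝ) - 1)) •
        ((x ^ (-1 : ℝ)) ^ (a - 2) * Real.exp (-c * (x ^ (-1 : ℝ)) ^ (2 : ℝ)))
      = x ^ (-a) * Real.exp (-c / x ^ 2) := by
  have h1 : x ^ (-1 : ℝ) = x⁻¹ := Real.rpow_neg_one x
  rw [h1, smul_eq_mul, abs_neg, abs_one, one_mul,
    Real.inv_rpow hx.le, Real.inv_rpow hx.le, ← Real.rpow_neg hx.le, ← Real.rpow_neg hx.le,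
    ← mul_assoc, ← Real.rpow_add hx, show (-1 : ℝ) - 1 + -(a - 2) = -a from by ring]
  have e2 : x ^ (-2 : ℝ) = (x ^ 2)⁻¹ := by
    rw [Real.rpow_neg hx.le, Real.rpow_two]
  rw [e2]
  ring

lemma key_integrableOn {a c : ℝ} (ha : 1 < a) (hc : 0 < c) :
    IntegrableOn (fun h : ℝ => h ^ (-a) * Real.exp (-c / h ^ 2)) (Set.Ioi 0) := by
  have H := (integrableOn_Ioi_comp_rpow_iff
      (fun y : ℝ => y ^ (a - 2) * Real.exp (-c * y ^ (2 : ℝ))) (p := (-1 : ℝ))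
      (by norm_num)).mpr (integrableOn_rpow_mul_exp_neg_mul_rpow (by linarith) two_pos hc)
  exact H.congr_fun (fun x hx => pt_eq hx) measurableSet_Ioi

lemma key_integral {a c : ℝ} (ha : 1 < a) (hc : 0 < c) :
    ∫ h in Set.Ioi (0 : ℝ), h ^ (-a) * Real.exp (-c / h ^ 2)
      = c ^ (-(a - 1) / 2) * (1 / 2) * Real.Gamma ((a - 1) / 2) := by
  have base := integral_rpow_mul_exp_neg_mul_rpow (p := 2) (q := a - 2) two_pos
    (by linarith) hc
  have sub := integral_comp_rpow_Ioi
    (fun y : ℝ => y ^ (a - 2) * Real.exp (-c * y ^ (2 : ℝ))) (p := (-1 : ℝ)) (by norm_num)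
  rw [setIntegral_congr_fun measurableSet_Ioi (fun x hx => pt_eq (a := a) (c := c) hx)] at sub
  rw [show (-(a - 2 + 1) / 2 : ℝ) = -(a - 1) / 2 from by ring,
    show (a - 2 + 1) / 2 = (a - 1) / 2 from by ring] at base
  rw [sub, base]

lemma crel {s b : ℝ} (hs : 0 < s) : (s ^ 2 / 2) ^ (-b / 2) = 2 ^ (b / 2) * s ^ (-b) := by
  rw [Real.div_rpow (sq_nonneg s) (by norm_num : (0 : ℝ) ≤ 2),
    ← Real.rpow_two, ← Real.rpow_mul hs.le,
    show (2 : ℝ) * (-b / 2) = -b from by ring,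
    show (-b / 2 : ℝ) = -(b / 2) from by ring,
    Real.rpow_neg (by norm_num : (0 : ℝ) ≤ 2), div_inv_eq_mul, mul_comm]

/-- The posterior mean of the bandwidth `h` under the prior factor `π(h) = h^{-δ}` and the
cross-validated Gaussian path likelihood `Φ(h) = ∑_{paths} ∏ⱼ K_h(xⱼ - x_{iⱼ})` equals
`C_{n,δ} · (∑ᵢ α(i) s(i)) / (∑ᵢ α(i))` with `α(i) = s(i)^{-(n+δ)}` and
`C_{n,δ} = (1/√2)·Γ((n+δ-1)/2)/Γ((n+δ)/2)`. -/
theorem posterior_mean_bandwidth (n : ℕ) (hn : 1 ≤ n) (δ : ℝ) (hδ : 0 < δ)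
    (x : Fin (n + 1) → ℝ) (hs : ∀ i ∈ paths n, 0 < spath n x i) :
    (∫ h in Set.Ioi (0 : ℝ),
        h * ((∑ i ∈ paths n, ∏ j, gk h (x j - x (i j))) * h ^ (-δ))) /
      (∫ h in Set.Ioi (0 : ℝ),
        (∑ i ∈ paths n, ∏ j, gk h (x j - x (i j))) * h ^ (-δ))
      = ((1 / Real.sqrt 2) * (Real.Gamma (((n : ℝ) + δ - 1) / 2) / Real.Gamma (((n : ℝ) + δ) / 2)))
        * ((∑ i ∈ paths n, spath n x i ^ (-((n : ℝ) + δ)) * spath n x i) /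
            (∑ i ∈ paths n, spath n x i ^ (-((n : ℝ) + δ)))) := by
  have hπ : (0 : ℝ) < Real.sqrt (2 * Real.pi) :=
    Real.sqrt_pos.mpr (by positivity)
  set A : ℝ := (Real.sqrt (2 * Real.pi))⁻¹ ^ (n + 1) with hA
  have hApos : 0 < A := by positivity
  set c : (Fin (n + 1) → Fin (n + 1)) → ℝ := fun i => spath n x i ^ 2 / 2 with hc
  have hcpos : ∀ i ∈ paths n, 0 < c i := fun i hi => by
    have := hs i hi; positivity
  have hn1 : (1 : ℝ) < (n : ℝ) + δ := by
    have : (1 : ℝ) ≤ (n : ℝ) := by exact_mod_cast hn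
    linarith
  -- product formula
  have hprod : ∀ i, ∀ h : ℝ, 0 < h →
      (∏ j, gk h (x j - x (i j)))
        = A * (h ^ (-((n : ℝ) + 1)) * Real.exp (-(c i) / h ^ 2)) := by
    intro i h hh
    have hsum : ∑ j, (x j - x (i j)) ^ 2 = spath n x i ^ 2 := by
      rw [spath, Real.sq_sqrt]; positivity
    have hpow : (1 / (h * Real.sqrt (2 * Real.pi))) ^ (n + 1)
        = A * h ^ (-((n : ℝ) + 1)) := by
      have h1 : h ^ (-((n : ℝ) + 1)) = (h ^ (n + 1 : ℕ))⁻¹ := by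
        rw [← Real.rpow_natCast h (n + 1), ← Real.rpow_neg hh.le]
        congr 1
        push_cast
        ring
      rw [h1, hA, one_div, mul_inv, mul_pow, inv_pow]
      ring
    calc ∏ j, gk h (x j - x (i j))
        = (1 / (h * Real.sqrt (2 * Real.pi))) ^ (n + 1) *
            Real.exp (∑ j, -(x j - x (i j)) ^ 2 / (2 * h ^ 2)) := by
          simp only [gk]
          rw [Finset.prod_mul_distrib, Finset.prod_const, Finset.card_univ,
            Fintype.card_fin, ← Real.exp_sum]
      _ = A * (h ^ (-((n : ℝ) + 1)) * Real.exp (-(c i) / h ^ 2)) := by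
          rw [hpow]
          have harg : ∑ j, -(x j - x (i j)) ^ 2 / (2 * h ^ 2) = -(c i) / h ^ 2 := by
            have e : ∑ j, -(x j - x (i j)) ^ 2 / (2 * h ^ 2)
                = (∑ j, (x j - x (i j)) ^ 2) * (-(1 / (2 * h ^ 2))) := by
              rw [Finset.sum_mul]
              exact Finset.sum_congr rfl fun j _ => by ring
            have hne : h ≠ 0 := ne_of_gt hh
            rw [e, hsum, hc]
            field_simp
          rw [harg]; ring
  -- generic sum-integral computation
  have key : ∀ a : ℝ, 1 < a →
      (∫ h in Set.Ioi (0 : ℝ),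
          ∑ i ∈ paths n, A * (h ^ (-a) * Real.exp (-(c i) / h ^ 2)))
        = ∑ i ∈ paths n,
            A * ((c i) ^ (-(a - 1) / 2) * (1 / 2) * Real.Gamma ((a - 1) / 2)) := by
    intro a ha
    rw [integral_finset_sum _ (fun i hi =>
      ((key_integrableOn ha (hcpos i hi)).const_mul A))]
    exact Finset.sum_congr rfl fun i hi => by
      rw [MeasureTheory.integral_const_mul, key_integral ha (hcpos i hi)]
  -- numerator
  have hnum : (∫ h in Set.Ioi (0 : ℝ),
        h * ((∑ i ∈ paths n, ∏ j, gk h (x j - x (i j))) * h ^ (-δ)))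
      = ∑ i ∈ paths n,
          A * ((c i) ^ (-(((n : ℝ) + δ) - 1) / 2) * (1 / 2) *
            Real.Gamma ((((n : ℝ) + δ) - 1) / 2)) := by
    rw [← key ((n : ℝ) + δ) hn1]
    refine setIntegral_congr_fun measurableSet_Ioi (fun h hh => ?_)
    have hh0 : (0 : ℝ) < h := hh
    rw [Finset.sum_mul, Finset.mul_sum]
    refine Finset.sum_congr rfl fun i hi => ?_
    rw [hprod i h hh0]
    have hexp : h ^ (-((n : ℝ) + δ)) = h * (h ^ (-((n : ℝ) + 1)) * h ^ (-δ)) := by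
      rw [show -((n : ℝ) + δ) = 1 + (-((n : ℝ) + 1) + -δ) from by ring,
        Real.rpow_add hh0, Real.rpow_one, Real.rpow_add hh0]
    rw [hexp]
    ring
  -- denominator
  have hden : (∫ h in Set.Ioi (0 : ℝ),
        (∑ i ∈ paths n, ∏ j, gk h (x j - x (i j))) * h ^ (-δ))
      = ∑ i ∈ paths n,
          A * ((c i) ^ (-((n : ℝ) + δ) / 2) * (1 / 2) *
            Real.Gamma (((n : ℝ) + δ) / 2)) := by
    have := key ((n : ℝ) + 1 + δ) (by linarith)
    rw [show ((n : ℝ) + 1 + δ - 1) = (n : ℝ) + δ from by ring] at this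
    rw [← this]
    refine setIntegral_congr_fun measurableSet_Ioi (fun h hh => ?_)
    have hh0 : (0 : ℝ) < h := hh
    rw [Finset.sum_mul]
    refine Finset.sum_congr rfl fun i hi => ?_
    rw [hprod i h hh0]
    have hexp : h ^ (-((n : ℝ) + 1 + δ)) = h ^ (-((n : ℝ) + 1)) * h ^ (-δ) := by
      rw [show -((n : ℝ) + 1 + δ) = -((n : ℝ) + 1) + -δ from by ring, Real.rpow_add hh0]
    rw [hexp]
    ring
  rw [hnum, hden]
  -- rewrite each term via crel
  have hnum2 : ∀ i ∈ paths n,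
      A * ((c i) ^ (-(((n : ℝ) + δ) - 1) / 2) * (1 / 2) *
        Real.Gamma ((((n : ℝ) + δ) - 1) / 2))
      = (A * (1 / 2) * Real.Gamma ((((n : ℝ) + δ) - 1) / 2) *
          (2 : ℝ) ^ ((((n : ℝ) + δ) - 1) / 2)) *
        (spath n x i ^ (-((n : ℝ) + δ)) * spath n x i) := by
    intro i hi
    have hsi := hs i hi
    rw [hc]
    simp only
    rw [crel (b := ((n : ℝ) + δ) - 1) hsi,
      show -(((n : ℝ) + δ) - 1) = -((n : ℝ) + δ) + 1 from by ring,
      Real.rpow_add hsi, Real.rpow_one]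
    ring
  have hden2 : ∀ i ∈ paths n,
      A * ((c i) ^ (-((n : ℝ) + δ) / 2) * (1 / 2) * Real.Gamma (((n : ℝ) + δ) / 2))
      = (A * (1 / 2) * Real.Gamma (((n : ℝ) + δ) / 2) *
          (2 : ℝ) ^ (((n : ℝ) + δ) / 2)) *
        (spath n x i ^ (-((n : ℝ) + δ))) := by
    intro i hi
    have hsi := hs i hi
    rw [hc]
    simp only
    rw [crel (b := (n : ℝ) + δ) hsi]
    ring
  rw [Finset.sum_congr rfl hnum2, Finset.sum_congr rfl hden2,
    ← Finset.mul_sum, ← Finset.mul_sum, mul_div_mul_comm]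
  congr 1
  -- constant ratio
  have hG2 : 0 < Real.Gamma (((n : ℝ) + δ) / 2) :=
    Real.Gamma_pos_of_pos (by positivity)
  have h2ne : (A * (1 / 2) : ℝ) ≠ 0 := by positivity
  rw [show A * (1 / 2) * Real.Gamma ((((n : ℝ) + δ) - 1) / 2) *
        (2 : ℝ) ^ ((((n : ℝ) + δ) - 1) / 2)
      = (A * (1 / 2)) * (Real.Gamma ((((n : ℝ) + δ) - 1) / 2) *
        (2 : ℝ) ^ ((((n : ℝ) + δ) - 1) / 2)) from by ring,
    show A * (1 / 2) * Real.Gamma (((n : ℝ) + δ) / 2) *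
        (2 : ℝ) ^ (((n : ℝ) + δ) / 2)
      = (A * (1 / 2)) * (Real.Gamma (((n : ℝ) + δ) / 2) *
        (2 : ℝ) ^ (((n : ℝ) + δ) / 2)) from by ring,
    mul_div_mul_left _ _ h2ne, mul_div_mul_comm]
  have hratio : (2 : ℝ) ^ ((((n : ℝ) + δ) - 1) / 2) / (2 : ℝ) ^ (((n : ℝ) + δ) / 2)
      = 1 / Real.sqrt 2 := by
    rw [← Real.rpow_sub (by norm_num : (0 : ℝ) < 2),
      show (((n : ℝ) + δ) - 1) / 2 - ((n : ℝ) + δ) / 2 = -(1 / 2) from by ring,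
      Real.rpow_neg (by norm_num : (0 : ℝ) ≤ 2), ← Real.sqrt_eq_rpow, one_div]
  rw [hratio]
  ring
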